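/- Let N be a finite nonempty set of flows with positive weights φ_j > 0. For each j ∈ N let E_j be concave, nonnegative, nondecreasing and left-continuous on (0,∞) with E_j(τ) = 0 for τ ≤ 0, and let 𝒞 be convex, nondecreasing and left-continuous on (0,∞) with 𝒞(τ) = 0 for τ ≤ 0. Consider a GPS scheduler in which the service process is exactly C(t) = 𝒞(t) and the arrival process of each flow is exactly A_j(t) = E_j(t) (the lazy/greedy scenario). For each j ∈ N define S_j(τ) := max over subsets M ⊆ N \ {j} of (φ_j / Σ_{k∈N\M} φ_k)·(𝒞(τ) − Σ_{k∈M} E_k(τ)). Then the departures necessarily satisfy D_j(t) = min{E_j(t), S_j(t)} for every j ∈ N and every t ≥ 0. -/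

import Mathlib

open Finset Set

/-- Sum of concave functions is concave. -/
lemma sum_concaveOn {ι : Type*} (s : Finset ι) (f : ι → ℝ → ℝ)
    (h : ∀ i ∈ s, ConcaveOn ℝ (Set.Ioi (0:ℝ)) (f i)) :
    ConcaveOn ℝ (Set.Ioi (0:ℝ)) (fun x => ∑ i ∈ s, f i x) := by
  classical
  induction s using Finset.induction with
  | empty => simpa using concaveOn_const (0:ℝ) (convex_Ioi (0:ℝ))
  | insert _ _ hx ih =>
    rename_i a t
    simp only [Finset.sum_insert hx]
    exact (h a (Finset.mem_insert_self a t)).add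
      (ih (fun i hi => h i (Finset.mem_insert_of_mem hi)))

/-- Two-interval slope comparison for convex functions on `Ioi 0`, product form. -/
lemma convex_slope_pair {F : ℝ → ℝ} (hF : ConvexOn ℝ (Set.Ioi (0:ℝ)) F)
    {a b c d : ℝ} (ha : 0 < a) (hab : a < b) (hbc : b ≤ c) (hcd : c < d) :
    (F b - F a) * (d - c) ≤ (F d - F c) * (b - a) := by
  have hb : (0:ℝ) < b := ha.trans hab
  have hc : (0:ℝ) < c := lt_of_lt_of_le hb hbc
  have hd : (0:ℝ) < d := hc.trans hcd
  have key : (F b - F a) / (b - a) ≤ (F d - F c) / (d - c) := by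
    rcases eq_or_lt_of_le hbc with h | h
    · subst h
      exact hF.slope_mono_adjacent (Set.mem_Ioi.2 ha) (Set.mem_Ioi.2 hd) hab hcd
    · calc (F b - F a) / (b - a) ≤ (F c - F b) / (c - b) :=
            hF.slope_mono_adjacent (Set.mem_Ioi.2 ha) (Set.mem_Ioi.2 hc) hab h
      _ ≤ (F d - F c) / (d - c) :=
            hF.slope_mono_adjacent (Set.mem_Ioi.2 hb) (Set.mem_Ioi.2 hd) h hcd
  have h1 : (0:ℝ) < b - a := by linarith
  have h2 : (0:ℝ) < d - c := by linarith
  have := mul_le_mul_of_nonneg_right key (by positivity : (0:ℝ) ≤ (b-a)*(d-c))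
  have e1 : (F b - F a) / (b - a) * ((b-a) * (d-c)) = (F b - F a) * (d - c) := by
    field_simp
  have e2 : (F d - F c) / (d - c) * ((b-a) * (d-c)) = (F d - F c) * (b - a) := by
    field_simp
  linarith [e1 ▸ e2 ▸ this]

lemma concave_slope_pair {F : ℝ → ℝ} (hF : ConcaveOn ℝ (Set.Ioi (0:ℝ)) F)
    {a b c d : ℝ} (ha : 0 < a) (hab : a < b) (hbc : b ≤ c) (hcd : c < d) :
    (F d - F c) * (b - a) ≤ (F b - F a) * (d - c) := by
  have := convex_slope_pair (hF.neg) ha hab hbc hcd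
  simp only [Pi.neg_apply] at this
  nlinarith

/-- Last zero of a function (left continuous at positive points) on `[c,d]`. -/
lemma last_zero {f : ℝ → ℝ} {c d : ℝ} (h0 : 0 ≤ c) (hcd : c ≤ d) (hfc : f c = 0)
    (hlc : ∀ x : ℝ, 0 < x → ContinuousWithinAt f (Set.Iio x) x) :
    ∃ y, c ≤ y ∧ y ≤ d ∧ f y = 0 ∧ ∀ u, y < u → u ≤ d → f u ≠ 0 := by
  set S : Set ℝ := {u | (c ≤ u ∧ u ≤ d) ∧ f u = 0} with hS
  have hne : c ∈ S := ⟨⟨le_refl c, hcd⟩, hfc⟩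
  have hbdd : BddAbove S := ⟨d, fun u hu => hu.1.2⟩
  set y := sSup S with hy
  have hcy : c ≤ y := le_csSup hbdd hne
  have hyd : y ≤ d := csSup_le ⟨c, hne⟩ (fun u hu => hu.1.2)
  refine ⟨y, hcy, hyd, ?_, ?_⟩
  · by_cases hyS : y ∈ S
    · exact hyS.2
    · have hcy' : c < y := by
        rcases eq_or_lt_of_le hcy with h | h
        · exact absurd (h ▸ hne) hyS
        · exact h
      have hypos : 0 < y := lt_of_le_of_lt h0 hcy'
      have hseq : ∀ n : ℕ, ∃ u ∈ S, y - 1/(n+1) < u := by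
        intro n
        apply exists_lt_of_lt_csSup ⟨c, hne⟩
        have : (0:ℝ) < 1/(n+1) := by positivity
        linarith
      choose u huS hult using hseq
      have huy : ∀ n, u n < y := by
        intro n
        rcases lt_or_eq_of_le (le_csSup hbdd (huS n)) with h | h
        · exact h
        · rw [← hy] at h; exact absurd (h ▸ huS n) hyS
      have htend : Filter.Tendsto u Filter.atTop (nhds y) := by
        have h1 : Filter.Tendsto (fun n : ℕ => y - 1/(n+1)) Filter.atTop (nhds y) := by
          have : Filter.Tendsto (fun n : ℕ => 1/((n:ℝ)+1)) Filter.atTop (nhds 0) :=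
            tendsto_one_div_add_atTop_nhds_zero_nat
          simpa using Filter.Tendsto.sub (tendsto_const_nhds) this
        exact tendsto_of_tendsto_of_tendsto_of_le_of_le h1 tendsto_const_nhds
          (fun n => le_of_lt (hult n)) (fun n => le_of_lt (huy n))
      have htend' : Filter.Tendsto u Filter.atTop (nhdsWithin y (Set.Iio y)) := by
        rw [tendsto_nhdsWithin_iff]
        exact ⟨htend, Filter.Eventually.of_forall (fun n => huy n)⟩
      have hcomp := (hlc y hypos).tendsto.comp htend'
      have hzero : ∀ n, f (u n) = 0 := fun n => (huS n).2
      have h2 : Filter.Tendsto (fun n : ℕ => f (u n)) Filter.atTop (nhds (f y)) := hcomp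
      have h3 : Filter.Tendsto (fun _ : ℕ => (0:ℝ)) Filter.atTop (nhds (f y)) := by
        apply h2.congr; intro n; exact hzero n
      exact (tendsto_nhds_unique tendsto_const_nhds h3).symm
  · intro v hyv hvd hfv
    have : v ∈ S := ⟨⟨le_trans hcy (le_of_lt hyv), hvd⟩, hfv⟩
    exact absurd (le_csSup hbdd this) (not_le.2 hyv)

set_option maxHeartbeats 2000000 in
theorem gps_greedy_lazy_departures {ι : Type*} [DecidableEq ι]
    (N : Finset ι) (hN : N.Nonempty)
    (φ : ι → ℝ) (E D : ι → ℝ → ℝ) (𝒞 : ℝ → ℝ)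
    (hφ : ∀ j ∈ N, 0 < φ j)
    (hEconc : ∀ j ∈ N, ConcaveOn ℝ (Set.Ioi (0:ℝ)) (E j))
    (hEnonneg : ∀ j ∈ N, ∀ τ : ℝ, 0 < τ → 0 ≤ E j τ)
    (hEmono : ∀ j ∈ N, MonotoneOn (E j) (Set.Ioi (0:ℝ)))
    (hElc : ∀ j ∈ N, ∀ τ : ℝ, 0 < τ → ContinuousWithinAt (E j) (Set.Iio τ) τ)
    (hEzero : ∀ j ∈ N, ∀ τ : ℝ, τ ≤ 0 → E j τ = 0)
    (h𝒞conv : ConvexOn ℝ (Set.Ioi (0:ℝ)) 𝒞)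
    (h𝒞mono : MonotoneOn 𝒞 (Set.Ioi (0:ℝ)))
    (h𝒞lc : ∀ τ : ℝ, 0 < τ → ContinuousWithinAt 𝒞 (Set.Iio τ) τ)
    (h𝒞zero : ∀ τ : ℝ, τ ≤ 0 → 𝒞 τ = 0)
    (hDmono : ∀ j ∈ N, Monotone (D j))
    (hDlc : ∀ j ∈ N, ∀ t : ℝ, ContinuousWithinAt (D j) (Set.Iio t) t)
    (hDzero : ∀ j ∈ N, ∀ t : ℝ, t ≤ 0 → D j t = 0)
    (hDA : ∀ j ∈ N, ∀ t : ℝ, D j t ≤ E j t)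
    (hwork_le : ∀ s t : ℝ, 0 ≤ s → s ≤ t → ∑ j ∈ N, (D j t - D j s) ≤ 𝒞 t - 𝒞 s)
    (hwork_eq : ∀ s t : ℝ, 0 ≤ s → s ≤ t →
      (∀ u : ℝ, s < u → u < t → 0 < ∑ j ∈ N, (E j u - D j u)) →
      ∑ j ∈ N, (D j t - D j s) = 𝒞 t - 𝒞 s)
    (hfair : ∀ s t : ℝ, 0 ≤ s → s < t → ∀ i ∈ N,
      (∀ u : ℝ, s < u → u < t → 0 < E i u - D i u) →
      ∀ j ∈ N, (D j t - D j s) / φ j ≤ (D i t - D i s) / φ i) :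
    ∀ j ∈ N, ∀ t : ℝ, 0 ≤ t →
      D j t =
        min (E j t)
          ((N.erase j).powerset.sup' ⟨∅, Finset.empty_mem_powerset _⟩
            (fun M => (φ j / ∑ k ∈ N \ M, φ k) * (𝒞 t - ∑ k ∈ M, E k t))) := by
  classical
  -- ## basic facts
  have hBnn : ∀ l ∈ N, ∀ u : ℝ, 0 ≤ E l u - D l u := fun l hl u => sub_nonneg.2 (hDA l hl u)
  have hSumnn : ∀ u : ℝ, 0 ≤ ∑ l ∈ N, (E l u - D l u) :=
    fun u => Finset.sum_nonneg (fun l hl => hBnn l hl u)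
  have hD0 : ∀ l ∈ N, D l 0 = 0 := fun l hl => hDzero l hl 0 le_rfl
  have hE0 : ∀ l ∈ N, E l 0 = 0 := fun l hl => hEzero l hl 0 le_rfl
  have h𝒞0 : 𝒞 0 = 0 := h𝒞zero 0 le_rfl
  have hBlc : ∀ l ∈ N, ∀ x : ℝ, 0 < x →
      ContinuousWithinAt (fun u => E l u - D l u) (Set.Iio x) x :=
    fun l hl x hx => (hElc l hl x hx).sub (hDlc l hl x)
  have hSumlc : ∀ x : ℝ, 0 < x →
      ContinuousWithinAt (fun u => ∑ l ∈ N, (E l u - D l u)) (Set.Iio x) x := by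
    intro x hx
    have : ∀ S : Finset ι, (∀ l ∈ S, l ∈ N) →
        ContinuousWithinAt (fun u => ∑ l ∈ S, (E l u - D l u)) (Set.Iio x) x := by
      intro S
      induction S using Finset.induction with
      | empty => intro _; simpa using continuousWithinAt_const
      | insert _ _ hx' ih =>
        rename_i a t
        intro hmem
        simp only [Finset.sum_insert hx']
        exact (hBlc a (hmem a (Finset.mem_insert_self a t)) x hx).add
          (ih (fun l hl => hmem l (Finset.mem_insert_of_mem hl)))
    exact this N (fun l hl => hl)
  have hDincC : ∀ l ∈ N, ∀ s u : ℝ, 0 ≤ s → s ≤ u → D l u - D l s ≤ 𝒞 u - 𝒞 s := by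
    intro l hl s u hs hsu
    have h1 := hwork_le s u hs hsu
    have h2 : ∀ k ∈ N, 0 ≤ D k u - D k s := fun k hk => sub_nonneg.2 (hDmono k hk hsu)
    calc D l u - D l s ≤ ∑ k ∈ N, (D k u - D k s) := Finset.single_le_sum h2 hl
    _ ≤ 𝒞 u - 𝒞 s := h1
  -- ## Step 1 : busy period from 0
  have hS1 : ∀ v : ℝ, 0 < v → 0 < ∑ l ∈ N, (E l v - D l v) →
      ∀ u : ℝ, 0 < u → u < v → 0 < ∑ l ∈ N, (E l u - D l u) := by
    intro v hv hbv
    have hf0 : (fun u => ∑ l ∈ N, (E l u - D l u)) 0 = 0 := by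
      simp only []
      apply Finset.sum_eq_zero
      intro l hl; rw [hE0 l hl, hD0 l hl]; ring
    obtain ⟨s0, hs00, hs0v, hbs0, hpos⟩ :=
      last_zero (f := fun u => ∑ l ∈ N, (E l u - D l u)) le_rfl (le_of_lt hv) hf0 hSumlc
    have hposgt : ∀ u, s0 < u → u ≤ v → 0 < ∑ l ∈ N, (E l u - D l u) :=
      fun u h1 h2 => lt_of_le_of_ne (hSumnn u) (Ne.symm (hpos u h1 h2))
    rcases eq_or_lt_of_le hs00 with h0 | h0
    · intro u hu huv
      exact hposgt u (by rw [← h0]; exact hu) (le_of_lt huv)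
    · exfalso
      have hs0v' : s0 < v := by
        rcases eq_or_lt_of_le hs0v with h | h
        · exfalso; rw [h] at hbs0; rw [hbs0] at hbv; exact lt_irrefl 0 hbv
        · exact h
      have hweq := hwork_eq s0 v (le_of_lt h0) (le_of_lt hs0v')
        (fun u h1 h2 => hposgt u h1 (le_of_lt h2))
      set a := s0/2 with ha
      have ha0 : 0 < a := by rw [ha]; linarith
      have has0 : a < s0 := by rw [ha]; linarith
      have hle := hwork_le a s0 (le_of_lt ha0) (le_of_lt has0)
      have hDEs0 : ∑ l ∈ N, D l s0 = ∑ l ∈ N, E l s0 := by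
        have h := hbs0
        rw [Finset.sum_sub_distrib] at h; linarith
      have hDEa : ∑ l ∈ N, D l a ≤ ∑ l ∈ N, E l a :=
        Finset.sum_le_sum (fun l hl => hDA l hl a)
      rw [Finset.sum_sub_distrib] at hweq hle
      have hbveq : ∑ l ∈ N, (E l v - D l v) = ∑ l ∈ N, E l v - ∑ l ∈ N, D l v :=
        Finset.sum_sub_distrib _ _
      -- g values
      have hg : ConcaveOn ℝ (Set.Ioi (0:ℝ)) ((fun x => ∑ l ∈ N, E l x) - 𝒞) :=
        (sum_concaveOn N E hEconc).sub h𝒞conv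
      set lam := (v - s0)/(v - a) with hlam
      set mu := (s0 - a)/(v - a) with hmu
      have hva : 0 < v - a := by linarith
      have hlam0 : 0 ≤ lam := by apply div_nonneg <;> linarith
      have hmu0 : 0 < mu := by apply div_pos <;> linarith
      have hsum1 : lam + mu = 1 := by rw [hlam, hmu]; field_simp; ring
      have hcomb : lam * a + mu * v = s0 := by
        rw [hlam, hmu]; field_simp; ring
      have hconc := hg.2 (Set.mem_Ioi.2 ha0) (Set.mem_Ioi.2 hv) hlam0 (le_of_lt hmu0) hsum1
      simp only [smul_eq_mul, Pi.sub_apply] at hconc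
      rw [hcomb] at hconc
      -- hconc : lam * (ΣE a - 𝒞 a) + mu * (ΣE v - 𝒞 v) ≤ ΣE s0 - 𝒞 s0
      have hga : (∑ l ∈ N, E l s0) - 𝒞 s0 ≤ (∑ l ∈ N, E l a) - 𝒞 a := by linarith
      have hgv : (∑ l ∈ N, E l v) - 𝒞 v
          = ((∑ l ∈ N, E l s0) - 𝒞 s0) + ∑ l ∈ N, (E l v - D l v) := by
        rw [hbveq]; linarith
      have h1 : lam * ((∑ l ∈ N, E l s0) - 𝒞 s0) ≤ lam * ((∑ l ∈ N, E l a) - 𝒞 a) :=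
        mul_le_mul_of_nonneg_left hga hlam0
      have h2 : mu * ((∑ l ∈ N, E l v) - 𝒞 v)
          = mu * ((∑ l ∈ N, E l s0) - 𝒞 s0) + mu * (∑ l ∈ N, (E l v - D l v)) := by
        rw [hgv]; ring
      have h3 : 0 < mu * (∑ l ∈ N, (E l v - D l v)) := mul_pos hmu0 hbv
      have h4 : lam * ((∑ l ∈ N, E l s0) - 𝒞 s0) + mu * ((∑ l ∈ N, E l s0) - 𝒞 s0)
          = (∑ l ∈ N, E l s0) - 𝒞 s0 := by rw [← add_mul, hsum1, one_mul]
      linarith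
  -- ## Step 2 : once a flow is empty it stays empty
  have hS2 : ∀ m ∈ N, ∀ w v : ℝ, 0 < w → w ≤ v → E m w - D m w = 0 → E m v - D m v = 0 := by
    intro m hm w v hw hwv hbw
    rcases eq_or_lt_of_le hwv with heq | hwv'
    · rw [← heq]; exact hbw
    by_contra hbv0
    have hbv : 0 < E m v - D m v := lt_of_le_of_ne (hBnn m hm v) (Ne.symm hbv0)
    have hv0 : 0 < v := lt_trans hw hwv'
    -- x := last zero of the backlog of m in [w, v]
    obtain ⟨x, hwx, hxv, hbx, hxpos⟩ :=
      last_zero (f := fun u => E m u - D m u) (le_of_lt hw) hwv hbw (hBlc m hm)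
    have hx0 : 0 < x := lt_of_lt_of_le hw hwx
    have hxv' : x < v := by
      rcases eq_or_lt_of_le hxv with h | h
      · exfalso; rw [h] at hbx; exact hbv0 hbx
      · exact h
    have hbmpos : ∀ u, x < u → u ≤ v → 0 < E m u - D m u :=
      fun u h1 h2 => lt_of_le_of_ne (hBnn m hm u) (Ne.symm (hxpos u h1 h2))
    -- system busy on (0, v)
    have hSv : 0 < ∑ l ∈ N, (E l v - D l v) :=
      lt_of_lt_of_le hbv (Finset.single_le_sum (fun l hl => hBnn l hl v) hm)
    have hbusy : ∀ u, 0 < u → u < v → 0 < ∑ l ∈ N, (E l u - D l u) := hS1 v hv0 hSv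
    -- the partition
    set W := N.filter (fun l => 0 < E l x - D l x) with hW
    set I := N \ W with hI
    have hWmemN : ∀ l ∈ W, l ∈ N := fun l hl => (Finset.mem_filter.1 hl).1
    have hImemN : ∀ l ∈ I, l ∈ N := fun l hl => (Finset.mem_sdiff.1 hl).1
    have hmI : m ∈ I := by
      rw [hI, Finset.mem_sdiff]
      refine ⟨hm, ?_⟩
      rw [hW, Finset.mem_filter]
      rintro ⟨-, h⟩; rw [hbx] at h; exact lt_irrefl 0 h
    have hIzero : ∀ l ∈ I, E l x - D l x = 0 := by
      intro l hl
      obtain ⟨hlN, hlW⟩ := Finset.mem_sdiff.1 hl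
      have : ¬ (0 < E l x - D l x) := fun h => hlW (Finset.mem_filter.2 ⟨hlN, h⟩)
      linarith [hBnn l hlN x]
    have hWne : W.Nonempty := by
      have hxpos' : 0 < ∑ l ∈ N, (E l x - D l x) := hbusy x hx0 hxv'
      by_contra hno
      rw [Finset.not_nonempty_iff_eq_empty] at hno
      have : ∑ l ∈ N, (E l x - D l x) ≤ 0 := by
        apply Finset.sum_nonpos
        intro l hl
        by_contra hpos'
        push_neg at hpos'
        have : l ∈ W := Finset.mem_filter.2 ⟨hl, hpos'⟩
        rw [hno] at this; exact absurd this (Finset.notMem_empty l)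
      linarith
    have hsplit : ∀ f : ι → ℝ, ∑ l ∈ N, f l = ∑ l ∈ I, f l + ∑ l ∈ W, f l := by
      intro f; rw [hI]
      exact (Finset.sum_sdiff (Finset.filter_subset _ N)).symm
    -- right persistence of W
    set K := 𝒞 (x+1) - 𝒞 x with hK
    have hK0 : 0 ≤ K := by
      rw [hK]
      have := h𝒞mono (Set.mem_Ioi.2 hx0) (Set.mem_Ioi.2 (by linarith : (0:ℝ) < x+1)) (by linarith)
      linarith
    have hCright : ∀ u, x < u → u ≤ x+1 → 𝒞 u - 𝒞 x ≤ K * (u - x) := by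
      intro u hxu hu1
      rcases eq_or_lt_of_le hu1 with h | h
      · rw [h, hK]; ring_nf; nlinarith [hK0]
      · have hcv := h𝒞conv.2 (Set.mem_Ioi.2 hx0)
          (Set.mem_Ioi.2 (by linarith : (0:ℝ) < x+1))
          (by linarith : (0:ℝ) ≤ x+1-u) (by linarith : (0:ℝ) ≤ u-x) (by ring)
        simp only [smul_eq_mul] at hcv
        have hcomb : (x+1-u) * x + (u-x) * (x+1) = u := by ring
        rw [hcomb] at hcv
        have h𝒞x : 𝒞 x ≤ 𝒞 x := le_refl _
        nlinarith [hcv]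
    set bmin := W.inf' hWne (fun l => E l x - D l x) with hbmin
    have hbmin0 : 0 < bmin := by
      rw [hbmin, Finset.lt_inf'_iff]
      intro l hl; exact (Finset.mem_filter.1 hl).2
    set δ := min 1 (bmin / (2*(K+1))) with hδ
    have hδ0 : 0 < δ := lt_min one_pos (by positivity)
    have hδ1 : δ ≤ 1 := min_le_left _ _
    have hWpersist : ∀ l ∈ W, ∀ u, x ≤ u → u ≤ x + δ → 0 < E l u - D l u := by
      intro l hl u hxu huδ
      rcases eq_or_lt_of_le hxu with h | h
      · rw [← h]; exact (Finset.mem_filter.1 hl).2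
      · have hlN := hWmemN l hl
        have hE' : E l x ≤ E l u :=
          hEmono l hlN (Set.mem_Ioi.2 hx0) (Set.mem_Ioi.2 (hx0.trans h)) (le_of_lt h)
        have hD' : D l u - D l x ≤ 𝒞 u - 𝒞 x := hDincC l hlN x u (le_of_lt hx0) (le_of_lt h)
        have hC' : 𝒞 u - 𝒞 x ≤ K * (u - x) := hCright u h (by linarith)
        have h1 : K * (u - x) ≤ K * δ :=
          mul_le_mul_of_nonneg_left (by linarith) hK0
        have h2 : K * δ ≤ K * (bmin/(2*(K+1))) :=
          mul_le_mul_of_nonneg_left (min_le_right _ _) hK0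
        have h3 : K * (bmin/(2*(K+1))) < bmin := by
          rw [mul_div_assoc']
          rw [div_lt_iff₀ (by positivity : (0:ℝ) < 2*(K+1))]
          nlinarith [hbmin0, hK0]
        have hbl : bmin ≤ E l x - D l x := by
          rw [hbmin]; exact Finset.inf'_le _ hl
        nlinarith
    -- left approach interval (a, x)
    have hleftaux : ∀ l : ι, ∃ al : ℝ, 0 < al ∧ al < x ∧
        (l ∈ W → ∀ u, al < u → u < x → 0 < E l u - D l u) := by
      intro l
      by_cases hl : l ∈ W
      · have hcl : ContinuousWithinAt (fun u => E l u - D l u) (Set.Iio x) x :=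
          hBlc l (hWmemN l hl) x hx0
        have hblx : 0 < E l x - D l x := (Finset.mem_filter.1 hl).2
        have hmem : (fun u => E l u - D l u) ⁻¹' (Set.Ioi 0) ∈ nhdsWithin x (Set.Iio x) :=
          hcl.tendsto (Ioi_mem_nhds hblx)
        rw [mem_nhdsLT_iff_exists_Ioo_subset] at hmem
        obtain ⟨a', ha', hsub⟩ := hmem
        refine ⟨max a' (x/2), lt_max_of_lt_right (by linarith), ?_, ?_⟩
        · exact max_lt (Set.mem_Iio.1 ha') (by linarith)
        · intro _ u h1 h2
          exact hsub ⟨lt_of_le_of_lt (le_max_left _ _) h1, h2⟩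
      · exact ⟨x/2, by linarith, by linarith, fun h => absurd h hl⟩
    choose al hal0 halx halW using hleftaux
    set a := W.sup' hWne al with ha
    have ha0 : 0 < a := by
      obtain ⟨l0, hl0⟩ := hWne
      exact lt_of_lt_of_le (hal0 l0) (Finset.le_sup' al hl0)
    have hax : a < x := by
      rw [ha, Finset.sup'_lt_iff]
      intro l hl; exact halx l
    have haW : ∀ l ∈ W, ∀ u, a < u → u < x → 0 < E l u - D l u := by
      intro l hl u h1 h2
      exact halW l hl u (lt_of_le_of_lt (Finset.le_sup' al hl) h1) h2
    set γ := x - a with hγ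
    have hγ0 : 0 < γ := by rw [hγ]; linarith
    obtain ⟨w0, hw0⟩ := hWne
    have hw0N := hWmemN w0 hw0
    -- fairness on (a, x)
    have hfairax : ∀ i ∈ W, ∀ l ∈ N, (D l x - D l a)/φ l ≤ (D i x - D i a)/φ i := by
      intro i hi l hl
      exact hfair a x (le_of_lt ha0) hax i (hWmemN i hi) (fun u h1 h2 => haW i hi u h1 h2) l hl
    set ρ := (D w0 x - D w0 a) / φ w0 with hρ
    have hρW : ∀ l ∈ W, D l x - D l a = φ l * ρ := by
      intro l hl
      have h1 := hfairax l hl w0 hw0N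
      have h2 := hfairax w0 hw0 l (hWmemN l hl)
      have heq : (D l x - D l a)/φ l = ρ := le_antisymm h2 h1
      rw [← heq]
      field_simp [ne_of_gt (hφ l (hWmemN l hl))]
    -- arrivals of I-flows are below their share, on (a,x)
    have hEI : ∀ l ∈ I, E l x - E l a ≤ φ l * ρ := by
      intro l hl
      have hlN := hImemN l hl
      have h1 : E l x - E l a ≤ D l x - D l a := by
        have hIz := hIzero l hl
        have h2 : 0 ≤ E l a - D l a := hBnn l hlN a
        linarith
      have h2 := hfairax w0 hw0 l hlN
      rw [div_le_div_iff₀ (hφ l hlN) (hφ w0 hw0N)] at h2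
      have h3 : (D w0 x - D w0 a) = φ w0 * ρ := hρW w0 hw0
      rw [h3] at h2
      have h4 : (D l x - D l a) * φ w0 ≤ (φ l * ρ) * φ w0 := by
        calc (D l x - D l a) * φ w0 ≤ φ w0 * ρ * φ l := h2
        _ = (φ l * ρ) * φ w0 := by ring
      have h5 : D l x - D l a ≤ φ l * ρ := le_of_mul_le_mul_right h4 (hφ w0 hw0N)
      linarith
    -- work equality on (a, x)
    have hweqax : ∑ l ∈ N, (D l x - D l a) = 𝒞 x - 𝒞 a :=
      hwork_eq a x (le_of_lt ha0) (le_of_lt hax)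
        (fun u h1 h2 => lt_of_lt_of_le (haW w0 hw0 u h1 h2)
          (Finset.single_le_sum (fun l hl => hBnn l hl u) hw0N))
    set ΦW := ∑ l ∈ W, φ l with hΦW
    have hΦW0 : 0 < ΦW := Finset.sum_pos (fun l hl => hφ l (hWmemN l hl)) ⟨w0, hw0⟩
    have hsumW : ∑ l ∈ W, (D l x - D l a) = ΦW * ρ := by
      rw [hΦW, Finset.sum_mul]
      exact Finset.sum_congr rfl (fun l hl => hρW l hl)
    -- F-slope fact
    have hFax : ΦW * ρ ≤ (𝒞 x - ∑ l ∈ I, E l x) - (𝒞 a - ∑ l ∈ I, E l a) := by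
      have h2 : ∑ l ∈ I, (E l x - E l a) ≤ ∑ l ∈ I, (D l x - D l a) := by
        apply Finset.sum_le_sum
        intro l hl
        have hIz := hIzero l hl
        have h3 : 0 ≤ E l a - D l a := hBnn l (hImemN l hl) a
        linarith
      have h3 := hsplit (fun l => D l x - D l a)
      have h4 : ∑ l ∈ I, (E l x - E l a) = ∑ l ∈ I, E l x - ∑ l ∈ I, E l a :=
        Finset.sum_sub_distrib _ _
      have h5 : ∑ l ∈ I, (D l x - D l a) = ∑ l ∈ I, D l x - ∑ l ∈ I, D l a :=
        Finset.sum_sub_distrib _ _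
      linarith [hweqax, hsumW]
    -- convexity of F
    have hFconv : ConvexOn ℝ (Set.Ioi (0:ℝ)) (fun u => 𝒞 u - ∑ l ∈ I, E l u) := by
      have := h𝒞conv.sub (sum_concaveOn I E (fun l hl => hEconc l (hImemN l hl)))
      exact this
    -- start of recursion
    set y0 := min v (x + δ) with hy0
    have hy0x : x < y0 := lt_min hxv' (by linarith)
    have hy0v : y0 ≤ v := min_le_left _ _
    have hy0δ : y0 ≤ x + δ := min_le_right _ _
    have hy00 : 0 < y0 := lt_trans hx0 hy0x
    have hby0 : 0 < E m y0 - D m y0 := hbmpos y0 hy0x hy0v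
    have hβy0 : 0 < ∑ l ∈ I, (E l y0 - D l y0) :=
      lt_of_lt_of_le hby0 (Finset.single_le_sum (fun l hl => hBnn l (hImemN l hl) y0) hmI)
    set B0 := ∑ l ∈ I, (E l y0 - E l x) with hB0
    have hβle : ∀ y, x < y → y ≤ y0 → ∑ l ∈ I, (E l y - D l y) ≤ B0 := by
      intro y h1 h2
      rw [hB0]
      apply Finset.sum_le_sum
      intro l hl
      have hlN := hImemN l hl
      have hIz := hIzero l hl
      have hDm : D l x ≤ D l y := hDmono l hlN (le_of_lt h1)
      have hEm : E l y ≤ E l y0 :=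
        hEmono l hlN (Set.mem_Ioi.2 (hx0.trans h1)) (Set.mem_Ioi.2 hy00) h2
      linarith
    set Φmax := N.sup' hN φ with hΦmax
    have hΦmaxle : ∀ l ∈ N, φ l ≤ Φmax := fun l hl => Finset.le_sup' φ hl
    have hΦmaxpos : 0 < Φmax := lt_of_lt_of_le (hφ m hm) (hΦmaxle m hm)
    have hcard0 : 0 < (N.card : ℝ) := by
      have := Finset.card_pos.2 hN
      exact_mod_cast this
    set c0 := ΦW / (Φmax * N.card) with hc0
    have hc00 : 0 < c0 := by
      rw [hc0]; positivity
    -- THE recursion : the idle-set backlog grows geometrically backwards in time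
    have hrec : ∀ k : ℕ, ∃ y, x < y ∧ y ≤ y0 ∧
        (1+c0)^k * (∑ l ∈ I, (E l y0 - D l y0)) ≤ ∑ l ∈ I, (E l y - D l y) := by
      intro k
      induction k with
      | zero => exact ⟨y0, hy0x, le_refl _, by simp⟩
      | succ k ih =>
        obtain ⟨y, hxy, hyy0, hβy⟩ := ih
        have hy0' : 0 < y := lt_trans hx0 hxy
        have hβypos : 0 < ∑ l ∈ I, (E l y - D l y) := by
          have hp : 0 < (1+c0)^k := pow_pos (by linarith) k
          exact lt_of_lt_of_le (mul_pos hp hβy0) hβy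
        obtain ⟨l0, hl0I, hl0max⟩ := Finset.exists_max_image I (fun l => E l y - D l y) ⟨m, hmI⟩
        have hl0N := hImemN l0 hl0I
        have hbl0 : 0 < E l0 y - D l0 y := by
          by_contra hc
          push_neg at hc
          have : ∑ l ∈ I, (E l y - D l y) ≤ 0 :=
            Finset.sum_nonpos (fun l hl => le_trans (hl0max l hl) hc)
          linarith
        have hbl0I : ∑ l ∈ I, (E l y - D l y) ≤ (N.card : ℝ) * (E l0 y - D l0 y) := by
          calc ∑ l ∈ I, (E l y - D l y) ≤ ∑ _l ∈ I, (E l0 y - D l0 y) :=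
                Finset.sum_le_sum hl0max
          _ = (I.card : ℝ) * (E l0 y - D l0 y) := by
                rw [Finset.sum_const, nsmul_eq_mul]
          _ ≤ (N.card : ℝ) * (E l0 y - D l0 y) := by
                apply mul_le_mul_of_nonneg_right _ (le_of_lt hbl0)
                have : I.card ≤ N.card := Finset.card_le_card (by rw [hI]; exact Finset.sdiff_subset)
                exact_mod_cast this
        -- y' := last zero of flow l0's backlog in [x, y]
        obtain ⟨y', hxy', hy'y, hby', hpos'⟩ :=
          last_zero (f := fun u => E l0 u - D l0 u) (le_of_lt hx0) (le_of_lt hxy)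
            (hIzero l0 hl0I) (hBlc l0 hl0N)
        have hy'lty : y' < y := by
          rcases eq_or_lt_of_le hy'y with h | h
          · exfalso; rw [h] at hby'; linarith
          · exact h
        have hbl0pos : ∀ u, y' < u → u ≤ y → 0 < E l0 u - D l0 u :=
          fun u h1 h2 => lt_of_le_of_ne (hBnn l0 hl0N u) (Ne.symm (hpos' u h1 h2))
        have hy'0 : 0 < y' := lt_of_lt_of_le hx0 hxy'
        -- fairness on (y', y)
        have hbacklW : ∀ i ∈ W, ∀ u, y' < u → u < y → 0 < E i u - D i u := by
          intro i hi u h1 h2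
          exact hWpersist i hi u (le_trans hxy' (le_of_lt h1))
            (by
              have : y ≤ x + δ := le_trans hyy0 hy0δ
              linarith)
        set ρ2 := (D l0 y - D l0 y') / φ l0 with hρ2
        have hfairy1 : ∀ l ∈ N, (D l y - D l y')/φ l ≤ ρ2 := by
          intro l hl
          exact hfair y' y (le_of_lt hy'0) hy'lty l0 hl0N
            (fun u h1 h2 => hbl0pos u h1 (le_of_lt h2)) l hl
        have hρ2W : ∀ l ∈ W, D l y - D l y' = φ l * ρ2 := by
          intro l hl
          have h1 := hfairy1 l (hWmemN l hl)
          have h2 := hfair y' y (le_of_lt hy'0) hy'lty l (hWmemN l hl)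
            (fun u hu1 hu2 => hbacklW l hl u hu1 hu2) l0 hl0N
          have heq : (D l y - D l y')/φ l = ρ2 := le_antisymm h1 h2
          rw [← heq]; field_simp [ne_of_gt (hφ l (hWmemN l hl))]
        have hρ2l0 : D l0 y - D l0 y' = φ l0 * ρ2 := by
          rw [hρ2]; field_simp [ne_of_gt (hφ l0 hl0N)]
        -- work equality on (y', y)
        have hweqy : ∑ l ∈ N, (D l y - D l y') = 𝒞 y - 𝒞 y' :=
          hwork_eq y' y (le_of_lt hy'0) (le_of_lt hy'lty)
            (fun u h1 h2 => lt_of_lt_of_le (hbl0pos u h1 (le_of_lt h2))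
              (Finset.single_le_sum (fun l hl => hBnn l hl u) hl0N))
        have hsumW2 : ∑ l ∈ W, (D l y - D l y') = ΦW * ρ2 := by
          rw [hΦW, Finset.sum_mul]
          exact Finset.sum_congr rfl (fun l hl => hρ2W l hl)
        -- slope bounds
        have hslopeE : (E l0 y - E l0 y') * γ ≤ (E l0 x - E l0 a) * (y - y') := by
          have := concave_slope_pair (hEconc l0 hl0N) ha0 hax hxy' hy'lty
          rw [hγ]; linarith
        have hslopeF : ((𝒞 x - ∑ l ∈ I, E l x) - (𝒞 a - ∑ l ∈ I, E l a)) * (y - y')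
            ≤ ((𝒞 y - ∑ l ∈ I, E l y) - (𝒞 y' - ∑ l ∈ I, E l y')) * γ := by
          have := convex_slope_pair hFconv ha0 hax hxy' hy'lty
          rw [hγ]; linarith
        have hEl0ax : E l0 x - E l0 a ≤ φ l0 * ρ := hEI l0 hl0I
        -- the accounting identity
        have hid : ΦW * ρ2 = ((𝒞 y - ∑ l ∈ I, E l y) - (𝒞 y' - ∑ l ∈ I, E l y'))
            + (∑ l ∈ I, (E l y - D l y)) - (∑ l ∈ I, (E l y' - D l y')) := by
          have h1 := hsplit (fun l => D l y - D l y')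
          have h2 : ∑ l ∈ I, (D l y - D l y') = ∑ l ∈ I, D l y - ∑ l ∈ I, D l y' :=
            Finset.sum_sub_distrib _ _
          have h3 : ∑ l ∈ I, (E l y - D l y) = ∑ l ∈ I, E l y - ∑ l ∈ I, D l y :=
            Finset.sum_sub_distrib _ _
          have h4 : ∑ l ∈ I, (E l y' - D l y') = ∑ l ∈ I, E l y' - ∑ l ∈ I, D l y' :=
            Finset.sum_sub_distrib _ _
          linarith [hweqy, hsumW2]
        -- m's (that is, l0's) deficit on (y', y)
        have hl0def : φ l0 * ρ2 = (E l0 y - E l0 y') - (E l0 y - D l0 y) := by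
          have hb' : E l0 y' - D l0 y' = 0 := hby'
          linarith [hρ2l0]
        -- combine into backlog growth
        have hbig : (∑ l ∈ I, (E l y - D l y)) * φ l0 + ΦW * (E l0 y - D l0 y)
            ≤ (∑ l ∈ I, (E l y' - D l y')) * φ l0 := by
          have hφl0 := hφ l0 hl0N
          have c1 : ρ2 * γ * φ l0 = ((E l0 y - E l0 y') - (E l0 y - D l0 y)) * γ := by
            linear_combination γ * hl0def
          have c2 : ρ2 * γ * φ l0 ≤ φ l0 * ρ * (y - y') - (E l0 y - D l0 y) * γ := by
            have b1 : (E l0 y - E l0 y') * γ ≤ φ l0 * ρ * (y - y') := by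
              calc (E l0 y - E l0 y') * γ ≤ (E l0 x - E l0 a) * (y - y') := hslopeE
              _ ≤ φ l0 * ρ * (y - y') := by
                  apply mul_le_mul_of_nonneg_right hEl0ax; linarith
            linarith [c1, b1]
          have b2 : ΦW * ρ * (y - y')
              ≤ ((𝒞 y - ∑ l ∈ I, E l y) - (𝒞 y' - ∑ l ∈ I, E l y')) * γ := by
            calc ΦW * ρ * (y - y')
                ≤ ((𝒞 x - ∑ l ∈ I, E l x) - (𝒞 a - ∑ l ∈ I, E l a)) * (y - y') := by
                  apply mul_le_mul_of_nonneg_right hFax; linarith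
            _ ≤ _ := hslopeF
          have c3 : ((∑ l ∈ I, (E l y' - D l y')) - (∑ l ∈ I, (E l y - D l y))) * (γ * φ l0)
              = ((𝒞 y - ∑ l ∈ I, E l y) - (𝒞 y' - ∑ l ∈ I, E l y')) * γ * φ l0
                - ΦW * (ρ2 * γ * φ l0) := by
            linear_combination (γ * φ l0) * hid
          have c4 : ΦW * ρ * (y - y') * φ l0
              ≤ ((𝒞 y - ∑ l ∈ I, E l y) - (𝒞 y' - ∑ l ∈ I, E l y')) * γ * φ l0 :=
            mul_le_mul_of_nonneg_right b2 (le_of_lt hφl0)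
          have c5 : ΦW * (ρ2 * γ * φ l0)
              ≤ ΦW * (φ l0 * ρ * (y - y') - (E l0 y - D l0 y) * γ) :=
            mul_le_mul_of_nonneg_left c2 (le_of_lt hΦW0)
          have c6 : ΦW * (E l0 y - D l0 y) * γ
              ≤ ((∑ l ∈ I, (E l y' - D l y')) - (∑ l ∈ I, (E l y - D l y))) * (γ * φ l0) := by
            linarith [c3, c4, c5]
          have c7 : (ΦW * (E l0 y - D l0 y)) * γ
              ≤ (((∑ l ∈ I, (E l y' - D l y')) - (∑ l ∈ I, (E l y - D l y))) * φ l0) * γ := by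
            linarith [c6]
          have c8 := le_of_mul_le_mul_right c7 hγ0
          linarith [c8]
        -- and the growth factor
        have hgrow : (1 + c0) * (∑ l ∈ I, (E l y - D l y)) ≤ ∑ l ∈ I, (E l y' - D l y') := by
          have hφl0 := hφ l0 hl0N
          have h2 : φ l0 ≤ Φmax := hΦmaxle l0 hl0N
          have hpos3 : 0 < φ l0 * (Φmax * N.card) := mul_pos hφl0 (mul_pos hΦmaxpos hcard0)
          -- βy * φ l0 ≤ card * P * Φmax
          have d1 : (∑ l ∈ I, (E l y - D l y)) * φ l0
              ≤ ((N.card : ℝ) * (E l0 y - D l0 y)) * Φmax := by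
            apply mul_le_mul hbl0I h2 (le_of_lt hφl0)
            exact mul_nonneg (Nat.cast_nonneg _) (le_of_lt hbl0)
          -- c0 * (Φmax * card) = ΦW
          have d2 : c0 * (Φmax * N.card) = ΦW := by
            rw [hc0]; exact div_mul_cancel₀ ΦW (ne_of_gt (mul_pos hΦmaxpos hcard0))
          -- multiply target by φl0 * (Φmax * card)
          have d3 : (c0 * (∑ l ∈ I, (E l y - D l y))) * (φ l0 * (Φmax * N.card))
              ≤ (((∑ l ∈ I, (E l y' - D l y')) - (∑ l ∈ I, (E l y - D l y))))
                * (φ l0 * (Φmax * N.card)) := by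
            have e1 : (c0 * (∑ l ∈ I, (E l y - D l y))) * (φ l0 * (Φmax * N.card))
                = ΦW * ((∑ l ∈ I, (E l y - D l y)) * φ l0) := by
              linear_combination ((∑ l ∈ I, (E l y - D l y)) * φ l0) * d2
            have e2 : ΦW * ((∑ l ∈ I, (E l y - D l y)) * φ l0)
                ≤ ΦW * (((N.card : ℝ) * (E l0 y - D l0 y)) * Φmax) :=
              mul_le_mul_of_nonneg_left d1 (le_of_lt hΦW0)
            have e3 : (ΦW * (E l0 y - D l0 y)) * (Φmax * N.card)
                ≤ ((((∑ l ∈ I, (E l y' - D l y')) - (∑ l ∈ I, (E l y - D l y)))) * φ l0)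
                  * (Φmax * N.card) := by
              apply mul_le_mul_of_nonneg_right _ (le_of_lt (mul_pos hΦmaxpos hcard0))
              linarith [hbig]
            linarith [e1, e2, e3]
          have := le_of_mul_le_mul_right d3 hpos3
          linarith
        -- y' cannot be x
        rcases eq_or_lt_of_le hxy' with hxeq | hxlt
        · exfalso
          have hzero : ∑ l ∈ I, (E l y' - D l y') = 0 := by
            rw [← hxeq]
            exact Finset.sum_eq_zero (fun l hl => hIzero l hl)
          have hprod := mul_pos (show (0:ℝ) < 1 + c0 by linarith) hβypos
          linarith
        · refine ⟨y', hxlt, le_trans (le_of_lt hy'lty) hyy0, ?_⟩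
          calc (1+c0)^(k+1) * (∑ l ∈ I, (E l y0 - D l y0))
              = (1+c0) * ((1+c0)^k * (∑ l ∈ I, (E l y0 - D l y0))) := by ring
          _ ≤ (1+c0) * (∑ l ∈ I, (E l y - D l y)) := by
              apply mul_le_mul_of_nonneg_left hβy; linarith
          _ ≤ _ := hgrow
    -- finish: geometric growth beats the bound B0
    obtain ⟨n, hn⟩ := pow_unbounded_of_one_lt
      (B0 / (∑ l ∈ I, (E l y0 - D l y0))) (by linarith : (1:ℝ) < 1 + c0)
    obtain ⟨y, hy1, hy2, hy3⟩ := hrec n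
    have hB0b := hβle y hy1 hy2
    have : B0 < (1+c0)^n * (∑ l ∈ I, (E l y0 - D l y0)) := by
      rw [div_lt_iff₀ hβy0] at hn
      linarith
    linarith
  -- ## Assembly
  intro j hj t ht0
  have hjE := hj
  rcases eq_or_lt_of_le ht0 with h0 | ht
  · -- t = 0
    have hterm : ∀ M ∈ (N.erase j).powerset,
        (φ j / ∑ k ∈ N \ M, φ k) * (𝒞 t - ∑ k ∈ M, E k t) = 0 := by
      intro M hM
      have hMN : M ⊆ N := (Finset.mem_powerset.1 hM).trans (Finset.erase_subset _ _)
      have h1 : ∑ k ∈ M, E k t = 0 :=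
        Finset.sum_eq_zero (fun k hk => hEzero k (hMN hk) t (le_of_eq h0.symm))
      rw [h1, h𝒞zero t (le_of_eq h0.symm)]
      ring
    have hsup : (N.erase j).powerset.sup' ⟨∅, Finset.empty_mem_powerset _⟩
        (fun M => (φ j / ∑ k ∈ N \ M, φ k) * (𝒞 t - ∑ k ∈ M, E k t)) = 0 := by
      apply le_antisymm
      · exact Finset.sup'_le _ _ (fun M hM => le_of_eq (hterm M hM))
      · have := Finset.le_sup' (f := fun M => (φ j / ∑ k ∈ N \ M, φ k) * (𝒞 t - ∑ k ∈ M, E k t))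
          (Finset.empty_mem_powerset (N.erase j))
        rw [hterm ∅ (Finset.empty_mem_powerset _)] at this
        exact this
    rw [hsup, hDzero j hj t (le_of_eq h0.symm), hEzero j hj t (le_of_eq h0.symm)]
    simp
  · -- t > 0
    have hsumDC : ∀ (h : ∀ u, 0 < u → u < t → 0 < ∑ l ∈ N, (E l u - D l u)),
        ∑ l ∈ N, D l t = 𝒞 t := by
      intro h
      have heq := hwork_eq 0 t le_rfl (le_of_lt ht) h
      rw [Finset.sum_sub_distrib] at heq
      have h1 : ∑ l ∈ N, D l 0 = 0 := Finset.sum_eq_zero (fun l hl => hD0 l hl)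
      rw [h1, h𝒞0] at heq
      linarith
    by_cases hb : 0 < ∑ l ∈ N, (E l t - D l t)
    · -- busy case
      have hbusy : ∀ u, 0 < u → u < t → 0 < ∑ l ∈ N, (E l u - D l u) := hS1 t ht hb
      have hCt : ∑ l ∈ N, D l t = 𝒞 t := hsumDC hbusy
      set U := N.filter (fun k => D k t < E k t) with hU
      have hUN : U ⊆ N := Finset.filter_subset _ _
      have hUne : U.Nonempty := by
        by_contra hUe
        rw [Finset.not_nonempty_iff_eq_empty] at hUe
        have : ∑ l ∈ N, (E l t - D l t) ≤ 0 := by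
          apply Finset.sum_nonpos
          intro l hl
          by_contra hp
          push_neg at hp
          have : l ∈ U := Finset.mem_filter.2 ⟨hl, by linarith⟩
          rw [hUe] at this
          exact absurd this (Finset.notMem_empty l)
        linarith
      have hUback : ∀ k ∈ U, ∀ u, 0 < u → u < t → 0 < E k u - D k u := by
        intro k hk u h1 h2
        by_contra hc
        push_neg at hc
        have hzero : E k u - D k u = 0 := le_antisymm hc (hBnn k (hUN hk) u)
        have hz2 := hS2 k (hUN hk) u t h1 (le_of_lt h2) hzero
        have := (Finset.mem_filter.1 hk).2
        linarith
      have hR : ∀ i ∈ U, ∀ l ∈ N, φ i * D l t ≤ φ l * D i t := by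
        intro i hi l hl
        have h1 := hfair 0 t le_rfl ht i (hUN hi) (hUback i hi) l hl
        rw [hDzero l hl 0 le_rfl, hDzero i (hUN hi) 0 le_rfl] at h1
        rw [div_le_div_iff₀ (hφ l hl) (hφ i (hUN hi))] at h1
        -- h1 : (D l t - 0) * φ i ≤ (D i t - 0) * φ l
        linarith
      set ΦU := ∑ k ∈ U, φ k with hΦU
      have hΦU0 : 0 < ΦU := Finset.sum_pos (fun k hk => hφ k (hUN hk)) hUne
      have hEeqNU : ∀ k ∈ N \ U, E k t = D k t := by
        intro k hk
        obtain ⟨hkN, hkU⟩ := Finset.mem_sdiff.1 hk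
        have : ¬ D k t < E k t := fun h => hkU (Finset.mem_filter.2 ⟨hkN, h⟩)
        exact le_antisymm (not_lt.1 this) (hDA k hkN t)
      have hsumU : 𝒞 t - ∑ k ∈ N \ U, E k t = ∑ k ∈ U, D k t := by
        have h1 : ∑ k ∈ N \ U, E k t = ∑ k ∈ N \ U, D k t :=
          Finset.sum_congr rfl hEeqNU
        have h2 := Finset.sum_sdiff (f := fun k => D k t) hUN
        rw [h1]
        linarith [hCt]
      by_cases hjU : j ∈ U
      · -- j backlogged at t : D j t = S_j t ≤ E j t
        have hub : ∀ M ∈ (N.erase j).powerset,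
            (φ j / ∑ k ∈ N \ M, φ k) * (𝒞 t - ∑ k ∈ M, E k t) ≤ D j t := by
          intro M hM
          have hMsub : M ⊆ N.erase j := Finset.mem_powerset.1 hM
          have hMN : M ⊆ N := hMsub.trans (Finset.erase_subset _ _)
          have hjNM : j ∈ N \ M := Finset.mem_sdiff.2
            ⟨hj, fun hjM => (Finset.notMem_erase j N) (hMsub hjM)⟩
          have hΦ' : 0 < ∑ k ∈ N \ M, φ k :=
            Finset.sum_pos (fun k hk => hφ k (Finset.mem_sdiff.1 hk).1) ⟨j, hjNM⟩
          have h1 : 𝒞 t - ∑ k ∈ M, E k t ≤ ∑ k ∈ N \ M, D k t := by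
            have hsp := Finset.sum_sdiff (f := fun k => D k t) hMN
            have h2 : ∑ k ∈ M, D k t ≤ ∑ k ∈ M, E k t :=
              Finset.sum_le_sum (fun k hk => hDA k (hMN hk) t)
            linarith [hCt]
          have h3 : φ j * (∑ k ∈ N \ M, D k t) ≤ (∑ k ∈ N \ M, φ k) * D j t := by
            rw [Finset.mul_sum, Finset.sum_mul]
            exact Finset.sum_le_sum (fun k hk => hR j hjU k (Finset.mem_sdiff.1 hk).1)
          rw [div_mul_eq_mul_div, div_le_iff₀ hΦ']
          have h4 : φ j * (𝒞 t - ∑ k ∈ M, E k t) ≤ φ j * ∑ k ∈ N \ M, D k t :=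
            mul_le_mul_of_nonneg_left h1 (le_of_lt (hφ j hj))
          calc φ j * (𝒞 t - ∑ k ∈ M, E k t) ≤ φ j * ∑ k ∈ N \ M, D k t := h4
          _ ≤ (∑ k ∈ N \ M, φ k) * D j t := h3
          _ = D j t * ∑ k ∈ N \ M, φ k := by ring
        have hUc : N \ U ∈ (N.erase j).powerset := by
          rw [Finset.mem_powerset]
          intro k hk
          obtain ⟨hkN, hkU⟩ := Finset.mem_sdiff.1 hk
          rw [Finset.mem_erase]
          exact ⟨fun h => hkU (h ▸ hjU), hkN⟩
        have hNU : N \ (N \ U) = U := by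
          rw [Finset.sdiff_sdiff_self_left]
          exact Finset.inter_eq_right.2 hUN
        have hterm : D j t ≤ (φ j / ∑ k ∈ N \ (N \ U), φ k)
            * (𝒞 t - ∑ k ∈ N \ U, E k t) := by
          rw [hNU, hsumU, div_mul_eq_mul_div, le_div_iff₀ hΦU0]
          have h6 : ∑ k ∈ U, φ k * D j t ≤ ∑ k ∈ U, φ j * D k t :=
            Finset.sum_le_sum (fun k hk => hR k hk j hj)
          have h7 : ∑ k ∈ U, φ k * D j t = (∑ k ∈ U, φ k) * D j t := by
            rw [Finset.sum_mul]
          have h8 : ∑ k ∈ U, φ j * D k t = φ j * ∑ k ∈ U, D k t := by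
            rw [Finset.mul_sum]
          rw [h7, h8] at h6
          calc D j t * ΦU = (∑ k ∈ U, φ k) * D j t := by rw [← hΦU]; ring
          _ ≤ φ j * ∑ k ∈ U, D k t := h6
        have hSj : (N.erase j).powerset.sup' ⟨∅, Finset.empty_mem_powerset _⟩
            (fun M => (φ j / ∑ k ∈ N \ M, φ k) * (𝒞 t - ∑ k ∈ M, E k t)) = D j t := by
          apply le_antisymm
          · exact Finset.sup'_le _ _ hub
          · exact le_trans hterm (Finset.le_sup'
              (f := fun M => (φ j / ∑ k ∈ N \ M, φ k) * (𝒞 t - ∑ k ∈ M, E k t)) hUc)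
        rw [hSj, min_eq_right (hDA j hj t)]
      · -- j not backlogged at t
        have hDjE : D j t = E j t := by
          have : ¬ D j t < E j t := fun h => hjU (Finset.mem_filter.2 ⟨hj, h⟩)
          exact le_antisymm (hDA j hj t) (not_lt.1 this)
        have hjNU : j ∈ N \ U := Finset.mem_sdiff.2 ⟨hj, hjU⟩
        have hM : (N \ U).erase j ∈ (N.erase j).powerset :=
          Finset.mem_powerset.2 (Finset.erase_subset_erase j Finset.sdiff_subset)
        have hNM : N \ ((N \ U).erase j) = insert j U := by
          ext k
          simp only [Finset.mem_sdiff, Finset.mem_erase, Finset.mem_insert]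
          constructor
          · rintro ⟨hkN, hk2⟩
            by_cases hkj : k = j
            · exact Or.inl hkj
            · right
              by_contra hkU
              exact hk2 ⟨hkj, hkN, hkU⟩
          · rintro (rfl | hkU)
            · exact ⟨hj, fun h => absurd rfl h.1⟩
            · exact ⟨hUN hkU, fun h => h.2.2 hkU⟩
        have hterm2 : E j t ≤ (φ j / ∑ k ∈ N \ ((N \ U).erase j), φ k)
            * (𝒞 t - ∑ k ∈ (N \ U).erase j, E k t) := by
          rw [hNM]
          have hdenom : ∑ k ∈ insert j U, φ k = φ j + ΦU := Finset.sum_insert hjU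
          have h7 : ∑ k ∈ (N \ U).erase j, E k t = (∑ k ∈ N \ U, E k t) - E j t := by
            have := Finset.sum_erase_add (N \ U) (fun k => E k t) hjNU
            linarith
          have hnum : 𝒞 t - ∑ k ∈ (N \ U).erase j, E k t = (∑ k ∈ U, D k t) + E j t := by
            rw [h7]
            linarith [hsumU]
          rw [hdenom, hnum, div_mul_eq_mul_div, le_div_iff₀ (by linarith [hφ j hj] : 0 < φ j + ΦU)]
          have h6 : ∑ k ∈ U, φ k * D j t ≤ ∑ k ∈ U, φ j * D k t :=
            Finset.sum_le_sum (fun k hk => hR k hk j hj)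
          rw [← Finset.sum_mul, ← Finset.mul_sum] at h6
          rw [hDjE] at h6
          rw [hΦU.symm] at h6
          -- h6 : ΦU * E j t ≤ φ j * ∑ D k t
          linarith [h6]
        have hge : E j t ≤ (N.erase j).powerset.sup' ⟨∅, Finset.empty_mem_powerset _⟩
            (fun M => (φ j / ∑ k ∈ N \ M, φ k) * (𝒞 t - ∑ k ∈ M, E k t)) :=
          le_trans hterm2 (Finset.le_sup'
            (f := fun M => (φ j / ∑ k ∈ N \ M, φ k) * (𝒞 t - ∑ k ∈ M, E k t)) hM)
        rw [min_eq_left hge, hDjE]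
    · -- idle at t
      push_neg at hb
      have hzero : ∑ l ∈ N, (E l t - D l t) = 0 := le_antisymm hb (hSumnn t)
      have hall : ∀ k ∈ N, D k t = E k t := by
        intro k hk
        have := (Finset.sum_eq_zero_iff_of_nonneg (fun l hl => hBnn l hl t)).1 hzero k hk
        linarith
      have hCE : ∑ k ∈ N, E k t ≤ 𝒞 t := by
        have h1 := hwork_le 0 t le_rfl (le_of_lt ht)
        rw [Finset.sum_sub_distrib] at h1
        have h2 : ∑ l ∈ N, D l 0 = 0 := Finset.sum_eq_zero (fun l hl => hD0 l hl)
        have h3 : ∑ l ∈ N, D l t = ∑ l ∈ N, E l t :=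
          Finset.sum_congr rfl hall
        rw [h2, h𝒞0, h3] at h1
        linarith
      have hMe : N.erase j ∈ (N.erase j).powerset := Finset.mem_powerset_self _
      have hNe : N \ (N.erase j) = {j} := by
        ext k
        simp only [Finset.mem_sdiff, Finset.mem_erase, Finset.mem_singleton]
        constructor
        · rintro ⟨hkN, hk2⟩
          by_contra hkj
          exact hk2 ⟨hkj, hkN⟩
        · rintro rfl
          exact ⟨hj, fun h => absurd rfl h.1⟩
      have hterm3 : E j t ≤ (φ j / ∑ k ∈ N \ (N.erase j), φ k)
          * (𝒞 t - ∑ k ∈ N.erase j, E k t) := by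
        rw [hNe, Finset.sum_singleton, div_self (ne_of_gt (hφ j hj)), one_mul]
        have h7 : ∑ k ∈ N.erase j, E k t = (∑ k ∈ N, E k t) - E j t := by
          have := Finset.sum_erase_add N (fun k => E k t) hj
          linarith
        rw [h7]
        linarith [hCE]
      have hge : E j t ≤ (N.erase j).powerset.sup' ⟨∅, Finset.empty_mem_powerset _⟩
          (fun M => (φ j / ∑ k ∈ N \ M, φ k) * (𝒞 t - ∑ k ∈ M, E k t)) :=
        le_trans hterm3 (Finset.le_sup'
          (f := fun M => (φ j / ∑ k ∈ N \ M, φ k) * (𝒞 t - ∑ k ∈ M, E k t)) hMe)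
      rw [min_eq_left hge, hall j hj]
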